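/- If f ∈ ds has a nonzero coefficient of x^{n-1}y (nonzero depth-1 component in weight n), then n is odd. -/

import Mathlib

open List

/-- The multiset (as a list, with multiplicity) of shuffles of two words. -/
def shuffles {α : Type*} : List α → List α → List (List α)
  | [], v => [v]
  | u, [] => [u]
  | x :: u, y :: v =>
      ((shuffles u (y :: v)).map (x :: ·)) ++ ((shuffles (x :: u) v).map (y :: ·))
  termination_by u v => u.length + v.length

/-- The noncommutative polynomial ring `ℚ⟨x,y⟩`, realized as the monoid algebra of
the free monoid on two letters. -/
abbrev NCPoly : Type := MonoidAlgebra ℚ (FreeMonoid (Fin 2))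

/-- The generator `x`. -/
noncomputable def Xg : NCPoly := MonoidAlgebra.of ℚ (FreeMonoid (Fin 2)) (FreeMonoid.of 0)

/-- The generator `y`. -/
noncomputable def Yg : NCPoly := MonoidAlgebra.of ℚ (FreeMonoid (Fin 2)) (FreeMonoid.of 1)

/-- The monomial corresponding to a word in `x,y`. -/
noncomputable def ofW (w : List (Fin 2)) : NCPoly :=
  MonoidAlgebra.of ℚ (FreeMonoid (Fin 2)) (FreeMonoid.ofList w)

/-- The coefficient `(f|w)` of a word `w` in `f`. -/
noncomputable def coeffW (f : NCPoly) (w : List (Fin 2)) : ℚ := f.coeff (FreeMonoid.ofList w)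

/-- The value of the derivation `D_f` (with `D_f(x) = 0`, `D_f(y) = [y,f] = yf - fy`)
on the monomial given by a word. -/
noncomputable def Dword (f : NCPoly) : List (Fin 2) → NCPoly
  | [] => 0
  | a :: w => (if a = 1 then Yg * f - f * Yg else 0) * ofW w
      + (MonoidAlgebra.of ℚ (FreeMonoid (Fin 2)) (FreeMonoid.of a)) * Dword f w

/-- The derivation `D_f` of `ℚ⟨x,y⟩` determined by `D_f(x) = 0`, `D_f(y) = [y,f]`. -/
noncomputable def Dmap (f g : NCPoly) : NCPoly :=
  g.coeff.sum fun w c => c • Dword f (FreeMonoid.toList w)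

/-- The Poisson (Ihara) bracket `{f,g} = [f,g] + D_f(g) - D_g(f)`. -/
noncomputable def pois (f g : NCPoly) : NCPoly :=
  f * g - g * f + Dmap f g - Dmap g f

/-- The multiset (as a list, with multiplicity) of stuffles of two words in the
letters `y_i`, encoded as lists of positive integers. -/
def stuffles : List ℕ+ → List ℕ+ → List (List ℕ+)
  | [], v => [v]
  | u, [] => [u]
  | i :: u, j :: v =>
      ((stuffles u (j :: v)).map (i :: ·)) ++ ((stuffles (i :: u) v).map (j :: ·))
        ++ ((stuffles u v).map ((i + j) :: ·))
  termination_by u v => u.length + v.length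

/-- The word in `x,y` corresponding to a word `y_{a_1} ⋯ y_{a_r}` via `y_i = x^{i-1} y`. -/
def yWord (a : List ℕ+) : List (Fin 2) :=
  (a.map fun i => List.replicate ((i : ℕ) - 1) 0 ++ [1]).flatten

/-- The word `x^{n-1} y`. -/
def xWord (n : ℕ) : List (Fin 2) := List.replicate (n - 1) 0 ++ [1]

/-- The coefficient of `y_{a_1} ⋯ y_{a_r}` in `f_* = π_y(f) + f_corr`, where
`f_corr = Σ_{n≥1} ((-1)^{n-1}/n) (f|x^{n-1}y) yⁿ`. -/
noncomputable def starCoeff (f : NCPoly) (a : List ℕ+) : ℚ :=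
  coeffW f (yWord a) +
    if a ≠ [] ∧ ∀ i ∈ a, i = 1 then
      ((-1 : ℚ)) ^ (a.length - 1) / (a.length : ℚ) * coeffW f (xWord a.length)
    else 0

/-- Membership in the double shuffle space `ds`: degree `≥ 3`, the shuffle relations
(equivalently, `f ∈ Lie[x,y]`), and the stuffle relations for `f_*`. -/
noncomputable def InDS (f : NCPoly) : Prop :=
  (∀ w ∈ f.coeff.support, 3 ≤ (FreeMonoid.toList w).length) ∧
  (∀ u v : List (Fin 2), u ≠ [] → v ≠ [] →
    ((shuffles u v).map (coeffW f)).sum = 0) ∧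
  (∀ a b : List ℕ+, a ≠ [] → b ≠ [] →
    ((stuffles a b).map (starCoeff f)).sum = 0)


section AuxDS

/-- `Wd a b` is the word `x^a y x^b y`. -/
def Wd (a b : ℕ) : List (Fin 2) := replicate a 0 ++ 1 :: (replicate b 0 ++ [1])

lemma cons_Wd (a b : ℕ) : (0 : Fin 2) :: Wd a b = Wd (a+1) b := by
  simp [Wd, List.replicate_succ]

lemma step_sum (M : ℕ) (c1 c2 : ℕ → ℚ) (G : ℕ → ℚ)
    (hsucc : ∀ a < M+1, c2 (a+1) = c1 a) :
    ∑ a ∈ Finset.range (M+2), c2 a * G a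
      = (∑ a ∈ Finset.range (M+1), c1 a * G (a+1)) + c2 0 * G 0 := by
  rw [Finset.sum_range_succ' (fun a => c2 a * G a)]
  exact congrArg (· + _) (Finset.sum_congr rfl fun a ha => by
    rw [hsucc a (Finset.mem_range.mp ha)])

lemma shuffle_sum : ∀ (N k l : ℕ), k + l = N → ∀ g : List (Fin 2) → ℚ,
    ((shuffles (replicate k (0:Fin 2) ++ [1]) (replicate l (0:Fin 2) ++ [1])).map g).sum
      = ∑ a ∈ Finset.range (k+l+1), ((a.choose k : ℚ) + (a.choose l : ℚ)) * g (Wd a (k+l-a)) := by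
  intro N
  induction N with
  | zero =>
    intro k l hkl g
    obtain ⟨rfl, rfl⟩ : k = 0 ∧ l = 0 := by omega
    simp [shuffles, Wd]
    ring
  | succ N ih =>
    intro k l hkl g
    match k, l with
    | 0, 0 => omega
    | 0, l'+1 =>
      have ihl := ih 0 l' (by omega) (fun w => g ((0:Fin 2) :: w))
      simp only [List.replicate_succ, List.cons_append, List.replicate_zero, List.nil_append,
        Nat.zero_add] at ihl ⊢
      rw [shuffles]
      rw [show shuffles ([] : List (Fin 2)) (0 :: (replicate l' 0 ++ [1]))
          = [0 :: (replicate l' 0 ++ [1])] from by simp [shuffles]]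
      simp only [List.map_append, List.sum_append, List.map_map, List.map_cons, List.map_nil,
        List.sum_cons, List.sum_nil, Function.comp_def]
      rw [ihl]
      rw [show l' + 1 + 1 = l' + 2 from rfl,
        step_sum l' (fun a => ((a.choose 0 : ℚ) + (a.choose l' : ℚ)))
          (fun a => ((a.choose 0 : ℚ) + (a.choose (l'+1) : ℚ)))
          (fun a => g (Wd a (l'+1-a)))
          (fun a ha => by
            simp only [Nat.choose_succ_succ, Nat.choose_eq_zero_of_lt ha,
              Nat.choose_zero_right, Nat.cast_add, Nat.cast_zero, Nat.cast_one, Nat.add_zero])]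
      simp only [cons_Wd, Nat.add_sub_add_right, Nat.sub_zero, Nat.choose_zero_right,
        Nat.choose_eq_zero_of_lt (Nat.succ_pos l'), Nat.cast_one, Nat.cast_zero]
      rw [show (1:Fin 2) :: 0 :: (replicate l' 0 ++ [1]) = Wd 0 (l'+1) from by
        simp [Wd, List.replicate_succ]]
      ring
    | k'+1, 0 =>
      have ihk := ih k' 0 (by omega) (fun w => g ((0:Fin 2) :: w))
      simp only [List.replicate_succ, List.cons_append, List.replicate_zero, List.nil_append,
        Nat.add_zero] at ihk ⊢
      rw [shuffles]
      rw [show shuffles ((0:Fin 2) :: (replicate k' 0 ++ [1])) ([] : List (Fin 2))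
          = [0 :: (replicate k' 0 ++ [1])] from by simp [shuffles]]
      simp only [List.map_append, List.sum_append, List.map_map, List.map_cons, List.map_nil,
        List.sum_cons, List.sum_nil, Function.comp_def]
      rw [ihk]
      rw [show k' + 1 + 1 = k' + 2 from rfl,
        step_sum k' (fun a => ((a.choose k' : ℚ) + (a.choose 0 : ℚ)))
          (fun a => ((a.choose (k'+1) : ℚ) + (a.choose 0 : ℚ)))
          (fun a => g (Wd a (k'+1-a)))
          (fun a ha => by
            simp only [Nat.choose_succ_succ, Nat.choose_eq_zero_of_lt ha,
              Nat.choose_zero_right, Nat.cast_add, Nat.cast_zero, Nat.cast_one, Nat.add_zero])]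
      simp only [cons_Wd, Nat.add_sub_add_right, Nat.sub_zero, Nat.choose_zero_right,
        Nat.choose_eq_zero_of_lt (Nat.succ_pos k'), Nat.cast_one, Nat.cast_zero]
      rw [show (1:Fin 2) :: 0 :: (replicate k' 0 ++ [1]) = Wd 0 (k'+1) from by
        simp [Wd, List.replicate_succ]]
      ring
    | k'+1, l''+1 =>
      have ih1 := ih k' (l''+1) (by omega) (fun w => g ((0:Fin 2) :: w))
      have ih2 := ih (k'+1) l'' (by omega) (fun w => g ((0:Fin 2) :: w))
      have e1 : ∀ a : ℕ, k' + (l'' + 1) - a = k' + 1 + (l'' + 1) - (a + 1) := by omega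
      have e2 : ∀ a : ℕ, k' + 1 + l'' - a = k' + 1 + (l'' + 1) - (a + 1) := by omega
      have e3 : k' + (l'' + 1) + 1 = k' + l'' + 1 + 1 := by omega
      have e4 : k' + 1 + l'' + 1 = k' + l'' + 1 + 1 := by omega
      simp only [cons_Wd, e1, e3] at ih1
      simp only [cons_Wd, e2, e4] at ih2
      simp only [List.replicate_succ, List.cons_append] at ih1 ih2 ⊢
      rw [shuffles]
      simp only [List.map_append, List.sum_append, List.map_map, Function.comp_def]
      rw [ih1, ih2, ← Finset.sum_add_distrib]
      have hcong : ∑ x ∈ Finset.range ((k'+l''+1)+1),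
            (((x.choose k' : ℚ) + (x.choose (l''+1) : ℚ)) * g (Wd (x+1) (k'+1+(l''+1)-(x+1)))
              + ((x.choose (k'+1) : ℚ) + (x.choose l'' : ℚ)) * g (Wd (x+1) (k'+1+(l''+1)-(x+1))))
          = ∑ x ∈ Finset.range ((k'+l''+1)+1),
            ((((x.choose k' : ℚ) + (x.choose (l''+1) : ℚ))
              + ((x.choose (k'+1) : ℚ) + (x.choose l'' : ℚ))) * g (Wd (x+1) (k'+1+(l''+1)-(x+1)))) :=
        Finset.sum_congr rfl fun x _ => by ring
      rw [hcong]
      rw [show k' + 1 + (l'' + 1) + 1 = (k' + l'' + 1) + 2 from by omega,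
        step_sum (k' + l'' + 1)
          (fun a => (((a.choose k' : ℚ) + (a.choose (l''+1) : ℚ))
            + ((a.choose (k'+1) : ℚ) + (a.choose l'' : ℚ))))
          (fun a => ((a.choose (k'+1) : ℚ) + (a.choose (l''+1) : ℚ)))
          (fun a => g (Wd a (k'+1+(l''+1)-a)))
          (fun a ha => by
            simp only [Nat.choose_succ_succ, Nat.cast_add]
            ring)]
      simp only [Nat.choose_eq_zero_of_lt (Nat.succ_pos k'),
        Nat.choose_eq_zero_of_lt (Nat.succ_pos l''), Nat.cast_zero]
      ring

lemma stuffles_single (i j : ℕ+) : stuffles [i] [j] = [[i,j],[j,i],[i+j]] := by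
  rw [stuffles]; simp [stuffles]

lemma starCoeff_eq (f : NCPoly) (l : List ℕ+) (hl : ¬ ∀ x ∈ l, x = 1) :
    starCoeff f l = coeffW f (yWord l) := by
  rw [starCoeff, if_neg (fun hc => hl hc.2), add_zero]

lemma yWord_single (i : ℕ+) : yWord [i] = xWord (i : ℕ) := by
  simp [yWord, xWord]

lemma yWord_pair (i j : ℕ+) : yWord [i,j] = Wd ((i:ℕ)-1) ((j:ℕ)-1) := by
  simp [yWord, Wd]

lemma Epow (m k : ℕ) (hk : k ≤ m) (hm : Even m) : (-1:ℚ)^(m-k) = (-1)^k := by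
  have h1 : (-1:ℚ)^(m-k) * (-1:ℚ)^k = 1 := by
    rw [← pow_add, show m - k + k = m from by omega, hm.neg_one_pow]
  have h2 : (-1:ℚ)^k * (-1:ℚ)^k = 1 := by
    rw [← pow_add]; exact Even.neg_one_pow ⟨k, rfl⟩
  exact mul_right_cancel₀ (pow_ne_zero _ (by norm_num)) (h1.trans h2.symm)

lemma Ealt (a m : ℕ) (ham : a ≤ m) :
    ∑ k ∈ Finset.range (m+1), (-1:ℚ)^k * (a.choose k : ℚ) = if a = 0 then 1 else 0 := by
  have hsub : Finset.range (a+1) ⊆ Finset.range (m+1) := by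
    intro x hx; simp only [Finset.mem_range] at *; omega
  rw [← Finset.sum_subset hsub (fun x hx hnx => by
    rw [Nat.choose_eq_zero_of_lt (by simp only [Finset.mem_range] at *; omega)]
    simp)]
  have := Int.alternating_sum_range_choose (n := a)
  exact_mod_cast this

lemma Ealt' (a m : ℕ) (ham : a ≤ m) (hm : Even m) :
    ∑ k ∈ Finset.range (m+1), (-1:ℚ)^k * (a.choose (m-k) : ℚ) = if a = 0 then 1 else 0 := by
  rw [← Ealt a m ham, ← Finset.sum_range_reflect (fun k => (-1:ℚ)^k * (a.choose k : ℚ)) (m+1)]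
  refine Finset.sum_congr rfl fun k hk => ?_
  have hk' : k ≤ m := by simp only [Finset.mem_range] at hk; omega
  rw [show m + 1 - 1 - k = m - k from by omega, Epow m k hk' hm]

lemma stuffle_pair (f : NCPoly)
    (hst : ∀ a b : List ℕ+, a ≠ [] → b ≠ [] → ((stuffles a b).map (starCoeff f)).sum = 0)
    (i j : ℕ+) (hij1 : i ≠ 1 ∨ j ≠ 1) :
    coeffW f (Wd ((i:ℕ)-1) ((j:ℕ)-1)) + coeffW f (Wd ((j:ℕ)-1) ((i:ℕ)-1))
      + coeffW f (xWord ((i:ℕ)+(j:ℕ))) = 0 := by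
  have h1 := hst [i] [j] (by simp) (by simp)
  rw [stuffles_single] at h1
  simp only [List.map_cons, List.map_nil, List.sum_cons, List.sum_nil, add_zero] at h1
  have hij : ¬ ∀ x ∈ ([i,j] : List ℕ+), x = 1 := fun hall => by
    rcases hij1 with hi | hj
    · exact hi (hall i (by simp))
    · exact hj (hall j (by simp))
  have hji : ¬ ∀ x ∈ ([j,i] : List ℕ+), x = 1 := fun hall => by
    rcases hij1 with hi | hj
    · exact hi (hall i (by simp))
    · exact hj (hall j (by simp))
  have hsum : ¬ ∀ x ∈ ([i+j] : List ℕ+), x = 1 := by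
    intro hall
    have h2 : ((i+j : ℕ+) : ℕ) = 1 := by rw [hall (i+j) (by simp)]; rfl
    rw [PNat.add_coe] at h2
    have hi' : 0 < (i:ℕ) := i.2
    have hj' : 0 < (j:ℕ) := j.2
    omega
  rw [starCoeff_eq f _ hij, starCoeff_eq f _ hji, starCoeff_eq f _ hsum,
    yWord_pair, yWord_pair, yWord_single, PNat.add_coe] at h1
  linarith [h1]

end AuxDS

/-- if `f ∈ ds` has a nonzero coefficient of `x^{n-1} y`, then `n` is odd. -/
theorem ds_depth_one_odd (f : NCPoly) (hf : InDS f) (n : ℕ) (hn : 1 ≤ n)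
    (h : coeffW f (xWord n) ≠ 0) : Odd n := by
  obtain ⟨hdeg, hsh, hst⟩ := hf
  by_contra hodd
  have hev : Even n := Nat.not_odd_iff_even.mp hodd
  have h3 : 3 ≤ n := by
    have hsupp : FreeMonoid.ofList (xWord n) ∈ f.coeff.support := Finsupp.mem_support_iff.mpr h
    have := hdeg _ hsupp
    simp only [FreeMonoid.toList_ofList, xWord, List.length_append, List.length_replicate,
      List.length_cons, List.length_nil] at this
    omega
  obtain ⟨r, hr⟩ := hev
  set m := n - 2 with hmdef
  have hm2 : 2 ≤ m := by omega
  have hmn : n = m + 2 := by omega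
  have hmev : Even m := ⟨r - 1, by omega⟩
  set c := coeffW f (xWord n) with hc
  set v : ℕ → ℚ := fun a => coeffW f (Wd a (m - a)) with hv
  -- stuffle (depth 1,1) relations
  have hSt : ∀ a ≤ m, v a + v (m - a) + c = 0 := by
    intro a ha
    have hij1 : (⟨a+1, Nat.succ_pos a⟩ : ℕ+) ≠ 1 ∨ (⟨m-a+1, Nat.succ_pos (m-a)⟩ : ℕ+) ≠ 1 := by
      rcases Nat.eq_zero_or_pos a with h0 | hpos
      · right
        intro heq
        have h2' : m - a + 1 = 1 := congrArg PNat.val heq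
        omega
      · left
        intro heq
        have h2' : a + 1 = 1 := congrArg PNat.val heq
        omega
    have h1' : coeffW f (Wd a (m - a)) + coeffW f (Wd (m - a) a)
        + coeffW f (xWord (a + 1 + (m - a + 1))) = 0 :=
      stuffle_pair f hst ⟨a+1, Nat.succ_pos a⟩ ⟨m-a+1, Nat.succ_pos (m-a)⟩ hij1
    rw [show a + 1 + (m - a + 1) = n from by omega, ← hc] at h1'
    simp only [hv]
    rw [show m - (m - a) = a from by omega]
    linarith [h1']
  -- shuffle (depth 1,1) relations
  have hSh : ∀ k ≤ m, ∑ a ∈ Finset.range (m+1),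
      ((a.choose k : ℚ) + (a.choose (m-k) : ℚ)) * v a = 0 := by
    intro k hk
    have h1 := hsh (replicate k 0 ++ [1]) (replicate (m-k) 0 ++ [1]) (by simp) (by simp)
    rw [shuffle_sum (k + (m-k)) k (m-k) rfl (coeffW f)] at h1
    rw [show k + (m-k) = m from by omega] at h1
    simpa only [hv] using h1
  -- alternating sum of shuffle relations gives v 0 = 0
  have hv0 : v 0 = 0 := by
    have hz : ∑ k ∈ Finset.range (m+1), (-1:ℚ)^k *
        (∑ a ∈ Finset.range (m+1), ((a.choose k : ℚ) + (a.choose (m-k) : ℚ)) * v a) = 0 :=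
      Finset.sum_eq_zero fun k hk => by
        rw [hSh k (Nat.lt_succ_iff.mp (Finset.mem_range.mp hk)), mul_zero]
    have hz2 : ∑ a ∈ Finset.range (m+1),
        (∑ k ∈ Finset.range (m+1), (-1:ℚ)^k * ((a.choose k : ℚ) + (a.choose (m-k) : ℚ)))
          * v a = 0 := by
      rw [← hz]
      rw [Finset.sum_congr rfl (fun a (_ : a ∈ Finset.range (m+1)) => by
        rw [Finset.sum_mul])]
      rw [Finset.sum_comm]
      refine Finset.sum_congr rfl fun k _ => ?_
      rw [Finset.mul_sum]
      exact Finset.sum_congr rfl fun a _ => by ring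
    have hinner : ∀ a ∈ Finset.range (m+1),
        (∑ k ∈ Finset.range (m+1), (-1:ℚ)^k * ((a.choose k : ℚ) + (a.choose (m-k) : ℚ)))
          * v a = (if a = 0 then (2:ℚ) else 0) * v a := by
      intro a ha
      have ham : a ≤ m := Nat.lt_succ_iff.mp (Finset.mem_range.mp ha)
      congr 1
      rw [Finset.sum_congr rfl (fun k (_ : k ∈ Finset.range (m+1)) =>
        mul_add ((-1:ℚ)^k) (a.choose k : ℚ) (a.choose (m-k) : ℚ))]
      rw [Finset.sum_add_distrib, Ealt a m ham, Ealt' a m ham hmev]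
      split <;> norm_num
    rw [Finset.sum_congr rfl hinner] at hz2
    rw [Finset.sum_eq_single 0 (fun b _ hb => by rw [if_neg hb, zero_mul])
      (fun habs => absurd (Finset.mem_range.mpr (Nat.succ_pos m)) habs)] at hz2
    norm_num at hz2
    linarith [hz2]
  have hst0 := hSt 0 (Nat.zero_le m)
  rw [Nat.sub_zero] at hst0
  have hvm : v m = -c := by linarith [hst0, hv0]
  have hSm := hSh m le_rfl
  rw [Nat.sub_self m] at hSm
  have hsingle : ∑ a ∈ Finset.range (m+1), (a.choose m : ℚ) * v a = v m := by
    rw [Finset.sum_eq_single m (fun b hb hbm => by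
        rw [Nat.choose_eq_zero_of_lt
          (lt_of_le_of_ne (Nat.lt_succ_iff.mp (Finset.mem_range.mp hb)) hbm),
          Nat.cast_zero, zero_mul])
      (fun habs => absurd (Finset.mem_range.mpr (Nat.lt_succ_self m)) habs)]
    rw [Nat.choose_self]
    norm_num
  have hsplit : ∑ a ∈ Finset.range (m+1), ((a.choose m : ℚ) + (a.choose 0 : ℚ)) * v a
      = (∑ a ∈ Finset.range (m+1), (a.choose m : ℚ) * v a)
        + ∑ a ∈ Finset.range (m+1), v a := by
    rw [← Finset.sum_add_distrib]
    exact Finset.sum_congr rfl fun a _ => by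
      rw [Nat.choose_zero_right]; push_cast; ring
  have hT : ∑ a ∈ Finset.range (m+1), v a = c := by
    rw [hsplit, hsingle] at hSm
    linarith [hSm, hvm]
  have hrefl : ∑ a ∈ Finset.range (m+1), v (m-a) = ∑ a ∈ Finset.range (m+1), v a := by
    calc ∑ a ∈ Finset.range (m+1), v (m-a)
        = ∑ a ∈ Finset.range (m+1), v (m+1-1-a) :=
          Finset.sum_congr rfl fun a _ => by rw [show m+1-1-a = m - a from by omega]
      _ = ∑ a ∈ Finset.range (m+1), v a := Finset.sum_range_reflect _ _
  have hsum2 : ∑ a ∈ Finset.range (m+1), (v a + v (m-a) + c) = 0 :=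
    Finset.sum_eq_zero fun a ha => hSt a (Nat.lt_succ_iff.mp (Finset.mem_range.mp ha))
  rw [Finset.sum_add_distrib, Finset.sum_add_distrib, hrefl, hT, Finset.sum_const,
    Finset.card_range, nsmul_eq_mul] at hsum2
  have hfin : ((m:ℚ) + 3) * c = 0 := by
    push_cast at hsum2
    linarith [hsum2]
  rcases mul_eq_zero.mp hfin with h' | h'
  · have : (0:ℚ) < (m:ℚ) + 3 := by positivity
    linarith
  · exact h h'
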